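/- A point (S,V,E,I,Q,H,R) ∈ ℝ⁷ with I = 0 is an equilibrium of the SVEIQHR model if and only if S = k₆, V = u₁k₆/μ, E = 0, Q = λ'/k₃, H = τλ'/(k₃k₄), and R = λ'(κk₄+φτ)/(k₃k₄k₅). Moreover k₆, u₁k₆/μ (when u₁ > 0), λ'/k₃, τλ'/(k₃k₄), and λ'(κk₄+φτ)/(k₃k₄k₅) are all positive; in particular the model has exactly one disease-free equilibrium. -/

import Mathlib

open Real Filter Polynomial Matrix

set_option maxHeartbeats 1600000 in
theorem stmt5
    (lam lam' mu mu' beta alpha theta gamma phi kappa tau : ℝ)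
    (delta u1 u2 u3 u4 u5 : ℝ)
    (hlam : 0 < lam) (hlam' : 0 < lam') (hmu : 0 < mu) (hmu' : 0 < mu')
    (hbeta : 0 < beta) (halpha : 0 < alpha) (htheta : 0 < theta)
    (hgamma : 0 < gamma) (hphi : 0 < phi) (hkappa : 0 < kappa) (htau : 0 < tau)
    (hdelta : delta ∈ Set.Icc (0:ℝ) 1) (hu1 : u1 ∈ Set.Icc (0:ℝ) 1)
    (hu2 : u2 ∈ Set.Icc (0:ℝ) 1) (hu3 : u3 ∈ Set.Icc (0:ℝ) 1)
    (hu4 : u4 ∈ Set.Icc (0:ℝ) 1) (hu5 : u5 ∈ Set.Icc (0:ℝ) 1)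
    (k1 k2 k3 k4 k5 k6 : ℝ)
    (hk1 : k1 = theta + u3 + mu) (hk2 : k2 = gamma + u4 + u5 + mu + mu')
    (hk3 : k3 = kappa + tau + mu) (hk4 : k4 = phi + mu + mu') (hk5 : k5 = mu + alpha)
    (hk6 : k6 = lam / (u1 + mu) + alpha * lam' * kappa / ((u1 + mu) * k3 * k5)
      + alpha * lam' * phi * tau / ((u1 + mu) * k3 * k4 * k5)) :
    (∀ S V E I Q H R : ℝ, I = 0 →
      ((lam + alpha * R - (1 - u2) * beta * S * I - u1 * S - mu * S = 0 ∧
      u1 * S - (1 - delta) * beta * V * I - mu * V = 0 ∧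
      (1 - u2) * beta * S * I + (1 - delta) * beta * V * I - (theta + u3 + mu) * E = 0 ∧
      theta * E - (gamma + u4 + u5 + mu + mu') * I = 0 ∧
      lam' + u3 * E + u4 * I - (kappa + tau + mu) * Q = 0 ∧
      tau * Q + u5 * I - (phi + mu + mu') * H = 0 ∧
      gamma * I + kappa * Q + phi * H - (alpha + mu) * R = 0) ↔
        (S = k6 ∧ V = u1 * k6 / mu ∧ E = 0 ∧ Q = lam' / k3 ∧ H = tau * lam' / (k3 * k4) ∧
          R = lam' * (kappa * k4 + phi * tau) / (k3 * k4 * k5)))) ∧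
    0 < k6 ∧ (0 < u1 → 0 < u1 * k6 / mu) ∧ 0 < lam' / k3 ∧ 0 < tau * lam' / (k3 * k4) ∧
    0 < lam' * (kappa * k4 + phi * tau) / (k3 * k4 * k5) ∧
    (∃! p : Fin 7 → ℝ, p 3 = 0 ∧
      (lam + alpha * (p 6) - (1 - u2) * beta * (p 0) * (p 3) - u1 * (p 0) - mu * (p 0) = 0 ∧
      u1 * (p 0) - (1 - delta) * beta * (p 1) * (p 3) - mu * (p 1) = 0 ∧
      (1 - u2) * beta * (p 0) * (p 3) + (1 - delta) * beta * (p 1) * (p 3) - (theta + u3 + mu) * (p 2) = 0 ∧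
      theta * (p 2) - (gamma + u4 + u5 + mu + mu') * (p 3) = 0 ∧
      lam' + u3 * (p 2) + u4 * (p 3) - (kappa + tau + mu) * (p 4) = 0 ∧
      tau * (p 4) + u5 * (p 3) - (phi + mu + mu') * (p 5) = 0 ∧
      gamma * (p 3) + kappa * (p 4) + phi * (p 5) - (alpha + mu) * (p 6) = 0)) := by
  have hu1' : 0 ≤ u1 := hu1.1
  have hum : 0 < u1 + mu := by linarith
  have hk3p : 0 < k3 := by rw [hk3]; linarith
  have hk4p : 0 < k4 := by rw [hk4]; linarith
  have hk5p : 0 < k5 := by rw [hk5]; linarith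
  have hk3n := hk3p.ne'
  have hk4n := hk4p.ne'
  have hk5n := hk5p.ne'
  have humn := hum.ne'
  have hmun := hmu.ne'
  have hk6p : 0 < k6 := by
    rw [hk6]
    have h1 : 0 < lam / (u1 + mu) := by positivity
    have h2 : 0 < alpha * lam' * kappa / ((u1 + mu) * k3 * k5) := by positivity
    have h3 : 0 < alpha * lam' * phi * tau / ((u1 + mu) * k3 * k4 * k5) := by positivity
    linarith
  have main : ∀ S V E I Q H R : ℝ, I = 0 →
      ((lam + alpha * R - (1 - u2) * beta * S * I - u1 * S - mu * S = 0 ∧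
      u1 * S - (1 - delta) * beta * V * I - mu * V = 0 ∧
      (1 - u2) * beta * S * I + (1 - delta) * beta * V * I - (theta + u3 + mu) * E = 0 ∧
      theta * E - (gamma + u4 + u5 + mu + mu') * I = 0 ∧
      lam' + u3 * E + u4 * I - (kappa + tau + mu) * Q = 0 ∧
      tau * Q + u5 * I - (phi + mu + mu') * H = 0 ∧
      gamma * I + kappa * Q + phi * H - (alpha + mu) * R = 0) ↔
        (S = k6 ∧ V = u1 * k6 / mu ∧ E = 0 ∧ Q = lam' / k3 ∧ H = tau * lam' / (k3 * k4) ∧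
          R = lam' * (kappa * k4 + phi * tau) / (k3 * k4 * k5))) := by
    intro S V E I Q H R hI
    subst hI
    constructor
    · rintro ⟨h1, h2, h3, h4, h5, h6, h7⟩
      have hE : E = 0 := by nlinarith [h4, htheta]
      have hQk : k3 * Q = lam' := by rw [hk3]; rw [hE] at h5; linarith
      have hHk : k4 * H = tau * Q := by rw [hk4]; linarith
      have hRk : k5 * R = kappa * Q + phi * H := by rw [hk5]; linarith
      have hSk : (u1 + mu) * S = lam + alpha * R := by linarith
      have hVk : mu * V = u1 * S := by linarith
      have hQ : Q = lam' / k3 := by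
        rw [eq_div_iff hk3n]; linear_combination hQk
      have hH : H = tau * lam' / (k3 * k4) := by
        rw [eq_div_iff (by positivity)]; linear_combination k3 * hHk + tau * hQk
      have hR : R = lam' * (kappa * k4 + phi * tau) / (k3 * k4 * k5) := by
        rw [eq_div_iff (by positivity)]
        linear_combination k3 * k4 * hRk + kappa * k4 * hQk + phi * k3 * hHk + phi * tau * hQk
      have hS : S = k6 := by
        have hden : ((u1 + mu) * k3 * k4 * k5) ≠ 0 := by positivity
        refine mul_right_cancel₀ hden ?_
        have hk6' : k6 * ((u1 + mu) * k3 * k4 * k5)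
            = lam * (k3 * k4 * k5) + alpha * lam' * kappa * k4 + alpha * lam' * phi * tau := by
          rw [hk6]; field_simp
        rw [hk6']
        have hR' : R * (k3 * k4 * k5) = lam' * (kappa * k4 + phi * tau) := by
          rw [hR]; field_simp
        linear_combination k3 * k4 * k5 * hSk + alpha * hR'
      have hV : V = u1 * k6 / mu := by
        rw [eq_div_iff hmun]
        rw [hS] at hVk
        linear_combination hVk
      exact ⟨hS, hV, hE, hQ, hH, hR⟩
    · rintro ⟨hS, hV, hE, hQ, hH, hR⟩
      subst hS hV hE hQ hH hR
      have hk5' : alpha + mu = k5 := by rw [hk5]; ring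
      refine ⟨?_, ?_, by ring, by ring, ?_, ?_, ?_⟩
      · rw [hk6]; field_simp; ring
      · field_simp; ring
      · rw [← hk3]; field_simp; ring
      · rw [← hk4]; field_simp; ring
      · rw [hk5']; field_simp; ring
  refine ⟨main, hk6p, fun h => by positivity, by positivity, by positivity, ?_, ?_⟩
  · have h0 : 0 < kappa * k4 + phi * tau := by positivity
    positivity
  · refine ⟨![k6, u1 * k6 / mu, 0, 0, lam' / k3, tau * lam' / (k3 * k4),
      lam' * (kappa * k4 + phi * tau) / (k3 * k4 * k5)], ?_, ?_⟩
    · exact ⟨rfl, (main k6 (u1 * k6 / mu) 0 0 (lam' / k3) (tau * lam' / (k3 * k4))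
        (lam' * (kappa * k4 + phi * tau) / (k3 * k4 * k5)) rfl).mpr
        ⟨rfl, rfl, rfl, rfl, rfl, rfl⟩⟩
    · rintro p ⟨hp3, hp⟩
      obtain ⟨e0, e1, e2, e4, e5, e6⟩ := (main (p 0) (p 1) (p 2) (p 3) (p 4) (p 5) (p 6) hp3).mp hp
      funext i
      fin_cases i
      · exact e0
      · exact e1
      · exact e2
      · exact hp3
      · exact e4
      · exact e5
      · exact e6
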